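/- arXiv:2007.10505 — 4 statements merged into one kernel-verified Lean document; each statement's English description precedes it below -/
import Mathlib

section
/- Let K be a k×k real symmetric positive semidefinite matrix and κ ∈ ℝ^k. Let P ⊆ {1,…,k} with complement P̄, and suppose the principal submatrix K_{P,P} is invertible. Define θ_P = (K_{P,P})⁻¹ κ_P, and let θ* ∈ ℝ^k be the vector equal to θ_P on the indices in P and 0 on the indices in P̄. If θ_P has all entries nonnegative and for every i ∈ P̄ one has Σ_{j∈P} K_{ij} (θ_P)_j ≥ κ_i, then θ* minimizes the NNK objective f(θ) = 1 − 2θᵀκ + θᵀKθ over all θ ∈ ℝ^k with nonnegative entries. -/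
open Matrix Finset

/-- the explicit active-set solution `θ_P = (K_{P,P})⁻¹ κ_P`, extended by zero
off `P`, minimizes the NNK objective over the nonnegative orthant, provided it is
nonnegative and the complementary inequality constraints hold. -/
theorem nnk_active_set_solution {k : ℕ} (K : Matrix (Fin k) (Fin k) ℝ)
    (hK : K.PosSemidef) (κ : Fin k → ℝ) (P : Finset (Fin k))
    (hInv : IsUnit (K.submatrix (fun i : P => (i : Fin k)) (fun j : P => (j : Fin k))).det)
    (θP : P → ℝ)
    (hθP : θP = (K.submatrix (fun i : P => (i : Fin k)) (fun j : P => (j : Fin k)))⁻¹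
        *ᵥ (fun i : P => κ i))
    (θs : Fin k → ℝ)
    (hθs : ∀ i : Fin k, θs i = if h : i ∈ P then θP ⟨i, h⟩ else 0)
    (hNonneg : ∀ j : P, 0 ≤ θP j)
    (hGe : ∀ i : Fin k, i ∉ P → κ i ≤ ∑ j : P, K i j * θP j) :
    ∀ θ : Fin k → ℝ, (∀ i, 0 ≤ θ i) →
      1 - 2 * (θs ⬝ᵥ κ) + θs ⬝ᵥ K.mulVec θs ≤ 1 - 2 * (θ ⬝ᵥ κ) + θ ⬝ᵥ K.mulVec θ := by
  intro θ hθ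
  -- symmetry of K
  have hKsym : ∀ i j, K i j = K j i := by
    intro i j
    have := congrFun (congrFun hK.1 j) i
    simpa using this
  -- K *ᵥ θs restricted
  have hmul : ∀ i, K.mulVec θs i = ∑ j : P, K i (j : Fin k) * θP j := by
    intro i
    have h1 : K.mulVec θs i = ∑ j ∈ P, K i j * θs j := by
      simp only [Matrix.mulVec, dotProduct]
      refine (Finset.sum_subset (Finset.subset_univ P) ?_).symm
      intro j _ hj
      rw [hθs]
      simp [hj]
    rw [h1, ← Finset.sum_attach P (fun j => K i j * θs j)]
    refine Finset.sum_congr rfl ?_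
    intro j _
    rw [hθs]
    simp [j.2]
  -- on P, K *ᵥ θs equals κ
  have hPeq : ∀ i : Fin k, i ∈ P → K.mulVec θs i = κ i := by
    intro i hi
    rw [hmul]
    have h2 : ((K.submatrix (fun i : P => (i : Fin k)) (fun j : P => (j : Fin k))) *ᵥ θP)
        = fun i : P => κ i := by
      rw [hθP, Matrix.mulVec_mulVec, Matrix.mul_nonsing_inv _ hInv, Matrix.one_mulVec]
    have := congrFun h2 ⟨i, hi⟩
    simpa [Matrix.mulVec, dotProduct, Matrix.submatrix, mul_comm] using this
  -- let d = θ - θs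
  set d : Fin k → ℝ := θ - θs with hd
  have hθeq : θ = θs + d := by funext i; simp [hd]
  -- nonneg gradient term
  have hgrad : 0 ≤ d ⬝ᵥ (fun i => K.mulVec θs i - κ i) := by
    simp only [dotProduct]
    apply Finset.sum_nonneg
    intro i _
    by_cases hi : i ∈ P
    · rw [hPeq i hi]; simp
    · have hd0 : d i = θ i := by simp [hd, hθs, hi]
      rw [hd0]
      apply mul_nonneg (hθ i)
      have := hGe i hi
      rw [← hmul] at this
      linarith
  -- psd term
  have hpsd : 0 ≤ d ⬝ᵥ K.mulVec d := by
    have := hK.dotProduct_mulVec_nonneg d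
    simpa using this
  -- symmetry of bilinear form
  have hsym : θs ⬝ᵥ K.mulVec d = d ⬝ᵥ K.mulVec θs := by
    simp only [dotProduct, Matrix.mulVec, Finset.mul_sum]
    rw [Finset.sum_comm]
    refine Finset.sum_congr rfl fun i _ => Finset.sum_congr rfl fun j _ => ?_
    rw [hKsym j i]; ring
  -- expand
  rw [hθeq]
  simp only [add_dotProduct, Matrix.mulVec_add, dotProduct_add]
  have hgrad' : 0 ≤ d ⬝ᵥ K.mulVec θs - d ⬝ᵥ κ := by
    have h' : d ⬝ᵥ (fun i => K.mulVec θs i - κ i) = d ⬝ᵥ K.mulVec θs - d ⬝ᵥ κ := by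
      simp only [dotProduct, mul_sub, Finset.sum_sub_distrib]
    linarith [hgrad, h'.symm ▸ hgrad]
  nlinarith [hpsd, hgrad', hsym]
end

section
/- Let H be a real inner product space and let φ_i, φ_j, φ_k ∈ H be unit vectors with pairwise inner products K_ij = ⟨φ_i, φ_j⟩, K_ik = ⟨φ_i, φ_k⟩, K_jk = ⟨φ_j, φ_k⟩, all lying in [0, 1), so that in particular φ_j and φ_k are linearly independent and the function (θ_j, θ_k) ↦ ‖φ_i − θ_j φ_j − θ_k φ_k‖² has a unique minimizer over the quadrant {θ_j ≥ 0, θ_k ≥ 0}. Then this minimizer has both coordinates strictly positive if and only if K_ik·K_jk < K_ij and K_ij·K_jk < K_ik (equivalently, K_jk < K_ij/K_ik < 1/K_jk). -/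
set_option maxHeartbeats 1000000 in
lemma kri_key (Kij Kik c : ℝ) (h1 : 0 ≤ Kij) (h2 : Kij < 1) (h3 : 0 ≤ Kik) (h4 : Kik < 1)
    (h5 : 0 ≤ c) (h6 : c < 1) :
    ∃ θ : ℝ × ℝ, (0 ≤ θ.1 ∧ 0 ≤ θ.2 ∧
        ∀ θ' : ℝ × ℝ, 0 ≤ θ'.1 → 0 ≤ θ'.2 →
          1 + θ.1^2 + θ.2^2 - 2*θ.1*Kij - 2*θ.2*Kik + 2*θ.1*θ.2*c ≤
          1 + θ'.1^2 + θ'.2^2 - 2*θ'.1*Kij - 2*θ'.2*Kik + 2*θ'.1*θ'.2*c) ∧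
      (∀ θ' : ℝ × ℝ, (0 ≤ θ'.1 ∧ 0 ≤ θ'.2 ∧
        ∀ θ'' : ℝ × ℝ, 0 ≤ θ''.1 → 0 ≤ θ''.2 →
          1 + θ'.1^2 + θ'.2^2 - 2*θ'.1*Kij - 2*θ'.2*Kik + 2*θ'.1*θ'.2*c ≤
          1 + θ''.1^2 + θ''.2^2 - 2*θ''.1*Kij - 2*θ''.2*Kik + 2*θ''.1*θ''.2*c) → θ' = θ) ∧
      ((0 < θ.1 ∧ 0 < θ.2) ↔ (Kik * c < Kij ∧ Kij * c < Kik)) := by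
  have hD : (0:ℝ) < 1 - c^2 := by nlinarith
  rcases le_or_gt Kij (Kik * c) with hcase1 | hcase1
  · -- minimizer (0, Kik)
    refine ⟨(0, Kik), ⟨le_refl 0, h3, ?_⟩, ?_, ?_⟩
    · rintro ⟨a, b⟩ ha hb
      simp only at ha hb ⊢
      nlinarith [sq_nonneg (a*c + (b - Kik)), sq_nonneg a, hD,
        mul_nonneg ha (sub_nonneg.2 hcase1)]
    · rintro ⟨a, b⟩ ⟨ha, hb, hmin⟩
      simp only at ha hb hmin
      have e1 := hmin (0, Kik) (le_refl 0) h3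
      simp only at e1
      have ha0 : a = 0 := by
        by_contra hne
        have hpos : 0 < a^2 * (1 - c^2) := mul_pos (by positivity) hD
        nlinarith [sq_nonneg (a*c + (b - Kik)), mul_nonneg ha (sub_nonneg.2 hcase1)]
      subst ha0
      have hb0 : b = Kik := by nlinarith [sq_nonneg (b - Kik)]
      simp [Prod.ext_iff, hb0]
    · exact ⟨fun h => absurd h.1 (lt_irrefl 0), fun h => absurd h.1 (not_lt.2 hcase1)⟩
  rcases le_or_gt Kik (Kij * c) with hcase2 | hcase2
  · -- minimizer (Kij, 0)
    refine ⟨(Kij, 0), ⟨h1, le_refl 0, ?_⟩, ?_, ?_⟩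
    · rintro ⟨a, b⟩ ha hb
      simp only at ha hb ⊢
      nlinarith [sq_nonneg (b*c + (a - Kij)), sq_nonneg b, hD,
        mul_nonneg hb (sub_nonneg.2 hcase2)]
    · rintro ⟨a, b⟩ ⟨ha, hb, hmin⟩
      simp only at ha hb hmin
      have e1 := hmin (Kij, 0) h1 (le_refl 0)
      simp only at e1
      have hb0 : b = 0 := by
        by_contra hne
        have hpos : 0 < b^2 * (1 - c^2) := mul_pos (by positivity) hD
        nlinarith [sq_nonneg (b*c + (a - Kij)), mul_nonneg hb (sub_nonneg.2 hcase2)]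
      subst hb0
      have ha0 : a = Kij := by nlinarith [sq_nonneg (a - Kij)]
      simp [Prod.ext_iff, ha0]
    · exact ⟨fun h => absurd h.2 (lt_irrefl 0), fun h => absurd h.2 (not_lt.2 hcase2)⟩
  · -- interior minimizer
    obtain ⟨A, hA⟩ : ∃ A : ℝ, A = (Kij - Kik * c) / (1 - c^2) := ⟨_, rfl⟩
    obtain ⟨B, hB⟩ : ∃ B : ℝ, B = (Kik - Kij * c) / (1 - c^2) := ⟨_, rfl⟩
    have hApos : 0 < A := hA ▸ div_pos (by nlinarith) hD
    have hBpos : 0 < B := hB ▸ div_pos (by nlinarith) hD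
    have hKijeq : Kij = A + c * B := by rw [hA, hB]; field_simp; ring
    have hKikeq : Kik = B + c * A := by rw [hA, hB]; field_simp; ring
    clear hA hB
    refine ⟨(A, B), ⟨le_of_lt hApos, le_of_lt hBpos, ?_⟩, ?_, ?_⟩
    · rintro ⟨a, b⟩ ha hb
      simp only at ha hb ⊢
      nlinarith [sq_nonneg (c*(a - A) + (b - B)), sq_nonneg (a - A), hD]
    · rintro ⟨a, b⟩ ⟨ha, hb, hmin⟩
      simp only at ha hb hmin
      have e1 := hmin (A, B) (le_of_lt hApos) (le_of_lt hBpos)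
      simp only at e1
      have ha0 : a = A := by
        by_contra hne
        have hne' : a - A ≠ 0 := sub_ne_zero.2 hne
        have hpos : 0 < (a - A)^2 * (1 - c^2) := mul_pos (by positivity) hD
        nlinarith [sq_nonneg (c*(a - A) + (b - B))]
      subst ha0
      have hb0 : b = B := by nlinarith [sq_nonneg (b - B)]
      simp [Prod.ext_iff, hb0]
    · exact ⟨fun _ => ⟨hcase1, hcase2⟩, fun _ => ⟨hApos, hBpos⟩⟩

/-- Kernel Ratio Interval theorem: for unit vectors `φi, φj, φk` with pairwise
inner products in `[0, 1)`, the nonnegative least squares approximation of `φi` by `φj, φk`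
has a unique minimizer over the quadrant, and both of its coordinates are strictly positive
iff `Kik·Kjk < Kij` and `Kij·Kjk < Kik`. -/
theorem kernel_ratio_interval {H : Type*} [NormedAddCommGroup H] [InnerProductSpace ℝ H]
    (φi φj φk : H) (hi : ‖φi‖ = 1) (hj : ‖φj‖ = 1) (hk : ‖φk‖ = 1)
    (Kij Kik Kjk : ℝ)
    (hKij : Kij = inner ℝ φi φj) (hKik : Kik = inner ℝ φi φk) (hKjk : Kjk = inner ℝ φj φk)
    (hij : Kij ∈ Set.Ico (0 : ℝ) 1) (hik : Kik ∈ Set.Ico (0 : ℝ) 1)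
    (hjk : Kjk ∈ Set.Ico (0 : ℝ) 1) :
    ∃ θ : ℝ × ℝ, (0 ≤ θ.1 ∧ 0 ≤ θ.2 ∧
        ∀ θ' : ℝ × ℝ, 0 ≤ θ'.1 → 0 ≤ θ'.2 →
          ‖φi - θ.1 • φj - θ.2 • φk‖ ^ 2 ≤ ‖φi - θ'.1 • φj - θ'.2 • φk‖ ^ 2) ∧
      (∀ θ' : ℝ × ℝ, (0 ≤ θ'.1 ∧ 0 ≤ θ'.2 ∧
        ∀ θ'' : ℝ × ℝ, 0 ≤ θ''.1 → 0 ≤ θ''.2 →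
          ‖φi - θ'.1 • φj - θ'.2 • φk‖ ^ 2 ≤ ‖φi - θ''.1 • φj - θ''.2 • φk‖ ^ 2) → θ' = θ) ∧
      ((0 < θ.1 ∧ 0 < θ.2) ↔ (Kik * Kjk < Kij ∧ Kij * Kjk < Kik)) := by
  have hii : (inner ℝ φi φi : ℝ) = 1 := by
    rw [real_inner_self_eq_norm_sq, hi]; norm_num
  have hjj : (inner ℝ φj φj : ℝ) = 1 := by
    rw [real_inner_self_eq_norm_sq, hj]; norm_num
  have hkk : (inner ℝ φk φk : ℝ) = 1 := by
    rw [real_inner_self_eq_norm_sq, hk]; norm_num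
  have hexp : ∀ a b : ℝ, ‖φi - a • φj - b • φk‖ ^ 2 =
      1 + a^2 + b^2 - 2*a*Kij - 2*b*Kik + 2*a*b*Kjk := by
    intro a b
    have c1 : (inner ℝ φj φi : ℝ) = Kij := by rw [real_inner_comm]; exact hKij.symm
    have c2 : (inner ℝ φk φi : ℝ) = Kik := by rw [real_inner_comm]; exact hKik.symm
    have c3 : (inner ℝ φk φj : ℝ) = Kjk := by rw [real_inner_comm]; exact hKjk.symm
    rw [← real_inner_self_eq_norm_sq]
    simp only [inner_sub_left, inner_sub_right, real_inner_smul_left, real_inner_smul_right,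
      hii, hjj, hkk, c1, c2, c3, ← hKij, ← hKik, ← hKjk]
    ring
  obtain ⟨θ, ⟨hθ1, hθ2, hθmin⟩, hθuniq, hθiff⟩ :=
    kri_key Kij Kik Kjk hij.1 hij.2 hik.1 hik.2 hjk.1 hjk.2
  refine ⟨θ, ⟨hθ1, hθ2, ?_⟩, ?_, hθiff⟩
  · intro θ' h1 h2
    rw [hexp, hexp]; exact hθmin θ' h1 h2
  · intro θ' ⟨h1, h2, hmin⟩
    exact hθuniq θ' ⟨h1, h2, fun θ'' ha hb => by
      have := hmin θ'' ha hb
      rwa [hexp, hexp] at this⟩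
end

section
/- Let (Ω, F, P) be a probability space and k ≥ 1. Let ε₁,…,ε_k be mutually independent, square-integrable, mean-zero real random variables with Var(ε_i) ≤ ν + A′δ^{α′} for constants ν, A′ ≥ 0, δ ≥ 0, α′ > 0. Let E₁,…,E_k be i.i.d. rate-1 exponential random variables, jointly independent of (ε₁,…,ε_k), and set W_i = E_i / (E₁ + ⋯ + E_k). Let b₁,…,b_k be real constants with |b_i| ≤ Aδ^α for constants A ≥ 0, α > 0. Then E[(Σ_{i=1}^k W_i (ε_i + b_i))²] ≤ A²δ^{2α} + (2/(k+1))·(ν + A′δ^{α′}). -/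
open MeasureTheory ProbabilityTheory Real Set Filter

/-- ∫_0^∞ x^n e^{-rx} dx = n! / r^(n+1) -/
lemma aux_integral_pow_exp (n : ℕ) {r : ℝ} (hr : 0 < r) :
    ∫ x in Ioi (0:ℝ), x ^ n * Real.exp (-(r * x)) = n.factorial / r ^ (n + 1) := by
  have h := Real.integral_rpow_mul_exp_neg_mul_Ioi (a := n + 1) (by positivity) hr
  rw [show ((n : ℝ) + 1 - 1) = (n : ℝ) by ring] at h
  have h2 : ∫ x in Ioi (0:ℝ), x ^ n * Real.exp (-(r * x))
      = ∫ x in Ioi (0:ℝ), x ^ (n : ℝ) * Real.exp (-(r * x)) := by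
    refine setIntegral_congr_fun measurableSet_Ioi fun x _ => ?_
    rw [Real.rpow_natCast]
  rw [h2, h, Real.Gamma_nat_eq_factorial, show ((n:ℝ) + 1) = ((n + 1 : ℕ) : ℝ) by push_cast; ring,
    Real.rpow_natCast, one_div, inv_pow]
  push_cast
  ring

lemma aux_integrableOn_pow_exp (n : ℕ) {r : ℝ} (hr : 0 < r) :
    IntegrableOn (fun x => x ^ n * Real.exp (-(r * x))) (Ioi (0:ℝ)) := by
  have h := integrableOn_rpow_mul_exp_neg_mul_rpow (p := 1) (s := n) (b := r)
    (by exact_mod_cast neg_one_lt_zero.trans_le n.cast_nonneg) one_pos hr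
  refine h.congr_fun (fun x hx => ?_) measurableSet_Ioi
  beta_reduce; rw [Real.rpow_one, Real.rpow_natCast, neg_mul]

lemma aux_lintegral_pow_exp (n : ℕ) {r : ℝ} (hr : 0 < r) :
    ∫⁻ x in Ioi (0:ℝ), ENNReal.ofReal (x ^ n * Real.exp (-(r * x)))
      = ENNReal.ofReal (n.factorial / r ^ (n + 1)) := by
  rw [← aux_integral_pow_exp n hr, ← ofReal_integral_eq_lintegral_ofReal
    (aux_integrableOn_pow_exp n hr)]
  filter_upwards [ae_restrict_mem measurableSet_Ioi] with x hx
  have : (0:ℝ) < x := hx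
  positivity
lemma aux_lintegral_expMeasure (f : ℝ → ENNReal) (hf : Measurable f) :
    ∫⁻ x, f x ∂(expMeasure 1) = ∫⁻ x in Ioi (0:ℝ), ENNReal.ofReal (Real.exp (-x)) * f x := by
  have hpdf : Measurable (gammaPDF 1 1) :=
    (measurable_gammaPDFReal 1 1).ennreal_ofReal
  rw [expMeasure, gammaMeasure, lintegral_withDensity_eq_lintegral_mul _ hpdf hf]
  have h1 : ∫⁻ x, (gammaPDF 1 1 * f) x = (∫⁻ x in Iio (0:ℝ), (gammaPDF 1 1 * f) x)
      + ∫⁻ x in Ici (0:ℝ), (gammaPDF 1 1 * f) x := by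
    rw [← lintegral_add_compl (μ := volume) _ (measurableSet_Iio (a := (0:ℝ))), compl_Iio]
  have h2 : ∫⁻ x in Iio (0:ℝ), (gammaPDF 1 1 * f) x = 0 := by
    rw [setLIntegral_congr_fun measurableSet_Iio (fun x (hx : x < 0) => ?_),
      lintegral_zero]
    simp [Pi.mul_apply, gammaPDF_of_neg hx]
  have h3 : ∫⁻ x in Ici (0:ℝ), (gammaPDF 1 1 * f) x = ∫⁻ x in Ioi (0:ℝ), (gammaPDF 1 1 * f) x := by
    rw [← Ioi_union_left, lintegral_union (by simp) (by simp)]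
    simp
  rw [h1, h2, h3, zero_add]
  refine setLIntegral_congr_fun measurableSet_Ioi (fun x (hx : 0 < x) => ?_)
  have : gammaPDF 1 1 x = ENNReal.ofReal (Real.exp (-x)) := by
    rw [gammaPDF_of_nonneg hx.le]
    norm_num
  simp [Pi.mul_apply, this]

lemma aux_exp_moment (n : ℕ) {t : ℝ} (ht : 0 < t) :
    ∫⁻ x, ENNReal.ofReal (x ^ n * Real.exp (-(t * x))) ∂(expMeasure 1)
      = ENNReal.ofReal (n.factorial / (1 + t) ^ (n + 1)) := by
  rw [aux_lintegral_expMeasure _ (by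
    refine Measurable.ennreal_ofReal ?_
    exact (measurable_id.pow_const n).mul ((measurable_id.const_mul t).neg.exp))]
  rw [← aux_lintegral_pow_exp n (r := 1 + t) (by linarith)]
  refine setLIntegral_congr_fun measurableSet_Ioi (fun x (hx : 0 < x) => ?_)
  rw [← ENNReal.ofReal_mul (Real.exp_nonneg _)]
  congr 1
  rw [mul_comm, mul_assoc, ← Real.exp_add]
  ring_nf

lemma aux_lintegral_prod_iIndep {Ω : Type*} [MeasurableSpace Ω] {μ : Measure Ω}
    [IsProbabilityMeasure μ] {ι : Type*} {f : ι → Ω → ENNReal}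
    (hindep : iIndepFun f μ) (hmeas : ∀ i, Measurable (f i))
    (s : Finset ι) : ∫⁻ ω, ∏ i ∈ s, f i ω ∂μ = ∏ i ∈ s, ∫⁻ ω, f i ω ∂μ := by
  classical
  induction s using Finset.induction_on with
  | empty => simp
  | insert a s hi ih =>
    rw [Finset.prod_insert hi]
    simp_rw [Finset.prod_insert hi]
    have hind : IndepFun (∏ j ∈ s, f j) (f a) μ :=
      hindep.indepFun_finsetProd_of_notMem hmeas hi
    have := lintegral_mul_eq_lintegral_mul_lintegral_of_indepFun (μ := μ)
      (f := fun ω => ∏ j ∈ s, f j ω) (g := f a)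
      (by exact Finset.measurable_prod _ fun i _ => hmeas i) (hmeas a) ?_
    · calc ∫⁻ ω, f a ω * ∏ j ∈ s, f j ω ∂μ
          = ∫⁻ ω, (fun ω => ∏ j ∈ s, f j ω) ω * f a ω ∂μ := by
            congr 1; funext ω; rw [mul_comm]
        _ = (∫⁻ ω, ∏ j ∈ s, f j ω ∂μ) * ∫⁻ ω, f a ω ∂μ := this
        _ = (∫⁻ ω, f a ω ∂μ) * ∏ j ∈ s, ∫⁻ ω, f j ω ∂μ := by rw [ih, mul_comm]
    · have he : (∏ j ∈ s, f j) = fun ω => ∏ j ∈ s, f j ω := funext fun ω => Finset.prod_apply ω s f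
      rw [he] at hind; exact hind
  
/-- outer integral: ∫_0^∞ 2 t (1+t)^{-(k+2)} dt = 2/(k(k+1)) -/
lemma aux_outer_integral {k : ℕ} (hk : 1 ≤ k) :
    ∫⁻ t in Ioi (0:ℝ), ENNReal.ofReal (2 * t / (1 + t) ^ (k + 2))
      = ENNReal.ofReal (2 / (k * (k + 1))) := by
  obtain ⟨m, rfl⟩ : ∃ m, k = m + 1 := ⟨k - 1, (Nat.succ_pred_eq_of_pos hk).symm⟩
  set g : ℝ → ℝ := fun t => 2 / ((m + 2) * (1 + t) ^ (m + 2)) - 2 / ((m + 1) * (1 + t) ^ (m + 1))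
    with hg
  have hderiv : ∀ t ∈ Ici (0:ℝ), HasDerivAt g (2 * t / (1 + t) ^ (m + 1 + 2)) t := by
    intro t ht
    have hu : (0:ℝ) < 1 + t := by simp at ht; linarith
    have h1 : HasDerivAt (fun t : ℝ => 1 + t) 1 t := (hasDerivAt_id t).const_add 1
    have h2 : HasDerivAt (fun t : ℝ => (1 + t) ^ (m + 2))
        (((m:ℝ) + 2) * (1 + t) ^ (m + 1) * 1) t := by
      have := h1.fun_pow (m + 2)
      simpa using this
    have h3 : HasDerivAt (fun t : ℝ => (1 + t) ^ (m + 1))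
        (((m:ℝ) + 1) * (1 + t) ^ m * 1) t := by
      have := h1.fun_pow (m + 1)
      simpa using this
    have h4 : HasDerivAt (fun t : ℝ => ((1 + t) ^ (m + 2))⁻¹)
        (-(((m:ℝ) + 2) * (1 + t) ^ (m + 1) * 1) / ((1 + t) ^ (m + 2)) ^ 2) t :=
      h2.inv (by positivity)
    have h5 : HasDerivAt (fun t : ℝ => ((1 + t) ^ (m + 1))⁻¹)
        (-(((m:ℝ) + 1) * (1 + t) ^ m * 1) / ((1 + t) ^ (m + 1)) ^ 2) t :=
      h3.inv (by positivity)
    have h6 := ((h4.const_mul (2 / ((m:ℝ) + 2))).fun_sub (h5.const_mul (2 / ((m:ℝ) + 1))))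
    convert! h6 using 1
    · funext t
      rw [hg]
      simp only [div_eq_mul_inv, mul_inv]
      push_cast
      ring
    · have hm2 : ((m:ℝ) + 2) ≠ 0 := by positivity
      have hm1 : ((m:ℝ) + 1) ≠ 0 := by positivity
      field_simp
      ring
  have hpos : ∀ t ∈ Ioi (0:ℝ), 0 ≤ 2 * t / (1 + t) ^ (m + 1 + 2) := by
    intro t ht
    have : (0:ℝ) < t := ht
    positivity
  have htend : Tendsto g atTop (nhds 0) := by
    have hb : Tendsto (fun t : ℝ => 1 + t) atTop atTop := tendsto_atTop_add_const_left _ _ tendsto_id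
    have t1 : Tendsto (fun t : ℝ => ((1 + t) ^ (m + 2))⁻¹) atTop (nhds 0) :=
      ((tendsto_pow_atTop (by omega)).comp hb).inv_tendsto_atTop
    have t2 : Tendsto (fun t : ℝ => ((1 + t) ^ (m + 1))⁻¹) atTop (nhds 0) :=
      ((tendsto_pow_atTop (by omega)).comp hb).inv_tendsto_atTop
    have h7 := ((t1.const_mul (2 / ((m:ℝ) + 2))).sub (t2.const_mul (2 / ((m:ℝ) + 1))))
    rw [show (2 / ((m:ℝ) + 2) * 0 - 2 / ((m:ℝ) + 1) * 0 : ℝ) = 0 by ring] at h7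
    convert h7 using 2 with t
    rw [hg]
    simp only [div_eq_mul_inv, mul_inv]
    ring
  have hint := integral_Ioi_of_hasDerivAt_of_nonneg' hderiv hpos htend
  have hintg := integrableOn_Ioi_deriv_of_nonneg' hderiv hpos htend
  rw [← ofReal_integral_eq_lintegral_ofReal hintg ?_]
  · rw [hint, hg]
    simp only [one_pow, mul_one]
    congr 1
    have hm2 : ((m:ℝ) + 2) ≠ 0 := by positivity
    have hm1 : ((m:ℝ) + 1) ≠ 0 := by positivity
    push_cast
    field_simp
    ring
  · filter_upwards [ae_restrict_mem measurableSet_Ioi] with t ht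
    exact hpos t ht

lemma aux_ae_pos {Ω : Type*} [MeasurableSpace Ω] {μ : Measure Ω} {k : ℕ}
    (E : Fin k → Ω → ℝ) (hEmeas : ∀ i, Measurable (E i))
    (hEdist : ∀ i, Measure.map (E i) μ = expMeasure 1) :
    ∀ᵐ ω ∂μ, ∀ j, 0 < E j ω := by
  rw [ae_all_iff]
  intro j
  have h0 : μ (E j ⁻¹' (Iic 0)) = 0 := by
    rw [← Measure.map_apply (hEmeas j) measurableSet_Iic, hEdist j, expMeasure, gammaMeasure,
      withDensity_apply _ measurableSet_Iic]
    have h := lintegral_exponentialPDF_eq_antiDeriv (r := 1) one_pos 0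
    simp only [mul_zero, neg_zero, Real.exp_zero, sub_self, if_pos le_rfl,
      ENNReal.ofReal_zero] at h
    exact h
  rw [ae_iff]
  convert h0 using 2
  ext ω
  simp [not_lt]

lemma aux_crown {Ω : Type*} [MeasurableSpace Ω] {μ : Measure Ω} [IsProbabilityMeasure μ]
    {k : ℕ} (hk : 1 ≤ k)
    (E : Fin k → Ω → ℝ) (hEmeas : ∀ i, Measurable (E i))
    (hEindep : iIndepFun E μ)
    (hEdist : ∀ i, Measure.map (E i) μ = expMeasure 1) (i : Fin k) :
    ∫⁻ ω, ENNReal.ofReal ((E i ω / ∑ j, E j ω) ^ 2) ∂μ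
      = ENNReal.ofReal (2 / (k * (k + 1))) := by
  obtain ⟨m, rfl⟩ : ∃ m, k = m + 1 := ⟨k - 1, (Nat.succ_pred_eq_of_pos hk).symm⟩
  have hNE : Nonempty (Fin (m + 1)) := ⟨i⟩
  set S : Ω → ℝ := fun ω => ∑ j, E j ω with hSdef
  have hSmeas : Measurable S := Finset.measurable_sum _ fun j _ => hEmeas j
  have hpos : ∀ᵐ ω ∂μ, ∀ j, 0 < E j ω := aux_ae_pos E hEmeas hEdist
  -- Step 1: pointwise Laplace identity
  have step1 : ∀ᵐ ω ∂μ, ENNReal.ofReal ((E i ω / S ω) ^ 2)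
      = ∫⁻ t in Ioi (0:ℝ), ENNReal.ofReal ((E i ω) ^ 2 * (t * Real.exp (-(t * S ω)))) := by
    filter_upwards [hpos] with ω hω
    have hS : 0 < S ω := Finset.sum_pos (fun j _ => hω j) Finset.univ_nonempty
    have hrw : ∀ t : ℝ, ENNReal.ofReal ((E i ω) ^ 2 * (t * Real.exp (-(t * S ω))))
        = ENNReal.ofReal ((E i ω) ^ 2) * ENNReal.ofReal (t * Real.exp (-(t * S ω))) := fun t =>
      ENNReal.ofReal_mul (sq_nonneg _)
    simp_rw [hrw]
    rw [lintegral_const_mul _ (show Measurable fun t : ℝ =>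
      ENNReal.ofReal (t * Real.exp (-(t * S ω))) by fun_prop)]
    have h1 : ∫⁻ t in Ioi (0:ℝ), ENNReal.ofReal (t * Real.exp (-(t * S ω)))
        = ENNReal.ofReal ((1:ℕ).factorial / (S ω) ^ (1 + 1)) := by
      rw [← aux_lintegral_pow_exp 1 hS]
      refine setLIntegral_congr_fun measurableSet_Ioi (fun t ht => ?_)
      rw [pow_one, mul_comm (S ω) t]
    rw [h1, ← ENNReal.ofReal_mul (sq_nonneg _)]
    congr 1
    rw [Nat.factorial_one, div_pow]
    push_cast
    ring
  rw [lintegral_congr_ae step1]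
  -- Step 2: swap
  have hmeasF : Measurable (Function.uncurry fun ω (t : ℝ) =>
      ENNReal.ofReal ((E i ω) ^ 2 * (t * Real.exp (-(t * S ω))))) := by
    refine Measurable.ennreal_ofReal ?_
    exact (((hEmeas i).comp measurable_fst).pow_const 2).mul
      (measurable_snd.mul (((measurable_snd.mul (hSmeas.comp measurable_fst)).neg).exp))
  rw [lintegral_lintegral_swap hmeasF.aemeasurable]
  -- Step 3: inner integral for fixed t > 0
  have step3 : ∀ t ∈ Ioi (0:ℝ), ∫⁻ ω, ENNReal.ofReal ((E i ω) ^ 2 * (t * Real.exp (-(t * S ω)))) ∂μ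
      = ENNReal.ofReal (2 * t / (1 + t) ^ (m + 1 + 2)) := by
    intro t ht
    have ht : (0:ℝ) < t := ht
    set G : Fin (m + 1) → ℝ → ℝ := fun j y => if j = i then y ^ 2 * Real.exp (-(t * y))
      else Real.exp (-(t * y)) with hGdef
    have hGnn : ∀ j y, 0 ≤ G j y := by
      intro j y
      simp only [hGdef]
      split_ifs <;> positivity
    have hGmeas : ∀ j, Measurable fun y => ENNReal.ofReal (G j y) := by
      intro j
      refine Measurable.ennreal_ofReal ?_
      simp only [hGdef]
      split_ifs
      · exact (measurable_id.pow_const 2).mul (((measurable_id.const_mul t).neg).exp)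
      · exact ((measurable_id.const_mul t).neg).exp
    -- pointwise identity
    have hpt : ∀ ω, ENNReal.ofReal ((E i ω) ^ 2 * (t * Real.exp (-(t * S ω))))
        = ENNReal.ofReal t * ∏ j, ENNReal.ofReal (G j (E j ω)) := by
      intro ω
      have hreal : (E i ω) ^ 2 * (t * Real.exp (-(t * S ω))) = t * ∏ j, G j (E j ω) := by
        have hexp : Real.exp (-(t * S ω)) = ∏ j, Real.exp (-(t * E j ω)) := by
          rw [← Real.exp_sum]
          congr 1
          rw [hSdef, Finset.mul_sum, ← Finset.sum_neg_distrib]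
        have hprod : ∏ j, G j (E j ω)
            = (∏ j, (if j = i then (E j ω) ^ 2 else 1)) * ∏ j, Real.exp (-(t * E j ω)) := by
          rw [← Finset.prod_mul_distrib]
          refine Finset.prod_congr rfl fun j _ => ?_
          simp only [hGdef]
          split_ifs <;> simp
        rw [hprod, Finset.prod_ite_eq' Finset.univ i (fun j => (E j ω) ^ 2),
          if_pos (Finset.mem_univ i), hexp]
        ring
      rw [hreal, ENNReal.ofReal_mul ht.le, ENNReal.ofReal_prod_of_nonneg
        (fun j _ => hGnn j (E j ω))]
    simp_rw [hpt]
    rw [lintegral_const_mul _ (show Measurable fun ω => ∏ j, ENNReal.ofReal (G j (E j ω)) from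
      Finset.measurable_prod _ fun j _ => (hGmeas j).comp (hEmeas j))]
    rw [aux_lintegral_prod_iIndep (f := fun j ω => ENNReal.ofReal (G j (E j ω)))
      (hEindep.comp (fun j y => ENNReal.ofReal (G j y)) hGmeas)
      (fun j => (hGmeas j).comp (hEmeas j)) Finset.univ]
    have hfactor : ∀ j, ∫⁻ ω, ENNReal.ofReal (G j (E j ω)) ∂μ
        = if j = i then ENNReal.ofReal (2 / (1 + t) ^ 3) else ENNReal.ofReal (1 / (1 + t)) := by
      intro j
      have hmap : ∫⁻ ω, ENNReal.ofReal (G j (E j ω)) ∂μ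
          = ∫⁻ y, ENNReal.ofReal (G j y) ∂(expMeasure 1) := by
        rw [← hEdist j, lintegral_map (hGmeas j) (hEmeas j)]
      rw [hmap]
      by_cases h : j = i
      · simp only [hGdef, if_pos h]
        have := aux_exp_moment 2 ht
        norm_num at this ⊢
        exact this
      · simp only [hGdef, if_neg h]
        have h0 := aux_exp_moment 0 ht
        norm_num at h0
        rw [one_div]
        exact h0
    simp_rw [hfactor]
    rw [← Finset.mul_prod_erase Finset.univ _ (Finset.mem_univ i), if_pos rfl]
    have herase : ∏ j ∈ Finset.univ.erase i,
        (if j = i then ENNReal.ofReal (2 / (1 + t) ^ 3) else ENNReal.ofReal (1 / (1 + t)))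
        = ENNReal.ofReal (1 / (1 + t)) ^ m := by
      rw [Finset.prod_congr rfl (fun j hj => if_neg (Finset.ne_of_mem_erase hj)),
        Finset.prod_const, Finset.card_erase_of_mem (Finset.mem_univ i)]
      simp
    rw [herase, ← ENNReal.ofReal_pow (by positivity), ← ENNReal.ofReal_mul (by positivity),
      ← ENNReal.ofReal_mul ht.le]
    congr 1
    have hu : (0:ℝ) < 1 + t := by linarith
    rw [div_pow, one_pow]
    field_simp
    ring_nf
  rw [setLIntegral_congr_fun measurableSet_Ioi step3, aux_outer_integral hk]

/-- in-hull core of Theorem 1: bound on the second moment of the NNK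
interpolation error, combining Dirichlet(1,…,1) weights (normalized i.i.d. rate-1
exponentials), independent centered noise with Hölder-controlled variance, and
Hölder-controlled bias terms. -/
theorem nnk_excess_risk_core {Ω : Type*} [MeasurableSpace Ω] {μ : Measure Ω}
    [IsProbabilityMeasure μ] {k : ℕ} (hk : 1 ≤ k)
    (ν A A' δ α α' : ℝ) (hν : 0 ≤ ν) (hA : 0 ≤ A) (hA' : 0 ≤ A')
    (hδ : 0 ≤ δ) (hα : 0 < α) (hα' : 0 < α')
    (ε : Fin k → Ω → ℝ) (hεL2 : ∀ i, MemLp (ε i) 2 μ)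
    (hεindep : iIndepFun ε μ)
    (hεmean : ∀ i, ∫ ω, ε i ω ∂μ = 0)
    (hεvar : ∀ i, variance (ε i) μ ≤ ν + A' * δ ^ α')
    (E : Fin k → Ω → ℝ) (hEmeas : ∀ i, Measurable (E i))
    (hEindep : iIndepFun E μ)
    (hEdist : ∀ i, Measure.map (E i) μ = expMeasure 1)
    (hEε : IndepFun (fun ω i => E i ω) (fun ω i => ε i ω) μ)
    (W : Ω → Fin k → ℝ) (hW : ∀ ω i, W ω i = E i ω / ∑ j, E j ω)
    (b : Fin k → ℝ) (hb : ∀ i, |b i| ≤ A * δ ^ α) :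
    ∫ ω, (∑ i, W ω i * (ε i ω + b i)) ^ 2 ∂μ ≤
      A ^ 2 * δ ^ (2 * α) + (2 / (k + 1)) * (ν + A' * δ ^ α') := by
  classical
  have hkR : (0:ℝ) < k := by exact_mod_cast hk
  have hk1R : (0:ℝ) < (k:ℝ) + 1 := by linarith
  have hSmeas : Measurable fun ω => ∑ j, E j ω := Finset.measurable_sum _ fun j _ => hEmeas j
  have hWeq : ∀ i, (fun ω => W ω i) = fun ω => E i ω / ∑ j, E j ω := fun i => funext fun ω => hW ω i
  have hWmeas : ∀ i, Measurable fun ω => W ω i := fun i => by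
    rw [hWeq i]; exact (hEmeas i).div hSmeas
  have hpos : ∀ᵐ ω ∂μ, ∀ j, 0 < E j ω := aux_ae_pos E hEmeas hEdist
  have hWprop : ∀ᵐ ω ∂μ, (∀ i, 0 ≤ W ω i ∧ W ω i ≤ 1) ∧ ∑ i, W ω i = 1 := by
    filter_upwards [hpos] with ω hω
    have hS : 0 < ∑ j, E j ω := Finset.sum_pos (fun j _ => hω j) ⟨⟨0, hk⟩, Finset.mem_univ _⟩
    constructor
    · intro i
      rw [hW ω i]
      constructor
      · exact div_nonneg (hω i).le hS.le
      · rw [div_le_one hS]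
        exact Finset.single_le_sum (f := fun j => E j ω) (fun j _ => (hω j).le)
          (Finset.mem_univ i)
    · simp_rw [hW ω]
      rw [← Finset.sum_div, div_self hS.ne']
  set T : Ω → ℝ := fun ω => ∑ i, W ω i * ε i ω with hTdef
  set B : Ω → ℝ := fun ω => ∑ i, W ω i * b i with hBdef
  have hBmeas : Measurable B := Finset.measurable_sum _ fun i _ => (hWmeas i).mul_const (b i)
  have hAδ : 0 ≤ A * δ ^ α := mul_nonneg hA (Real.rpow_nonneg hδ α)
  have hBbdd : ∀ᵐ ω ∂μ, |B ω| ≤ A * δ ^ α := by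
    filter_upwards [hWprop] with ω hω
    calc |B ω| ≤ ∑ i, |W ω i * b i| := Finset.abs_sum_le_sum_abs _ _
      _ ≤ ∑ i, W ω i * (A * δ ^ α) := by
          refine Finset.sum_le_sum fun i _ => ?_
          rw [abs_mul, abs_of_nonneg (hω.1 i).1]
          exact mul_le_mul_of_nonneg_left (hb i) (hω.1 i).1
      _ = (∑ i, W ω i) * (A * δ ^ α) := by rw [Finset.sum_mul]
      _ = A * δ ^ α := by rw [hω.2, one_mul]
  -- integrability facts
  have hεint : ∀ i, Integrable (ε i) μ := fun i => (hεL2 i).integrable one_le_two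
  have hεij : ∀ i j, Integrable (fun ω => ε i ω * ε j ω) μ := by
    intro i j
    by_cases h : i = j
    · subst h
      have := (hεL2 i).integrable_sq
      refine this.congr (ae_of_all _ fun ω => ?_)
      show ε i ω ^ 2 = ε i ω * ε i ω
      rw [pow_two]
    · exact (hεindep.indepFun h).integrable_mul (hεint i) (hεint j)
  have hWWbdd : ∀ i j, ∀ᵐ ω ∂μ, ‖W ω i * W ω j‖ ≤ 1 := by
    intro i j
    filter_upwards [hWprop] with ω hω
    rw [norm_mul]
    calc ‖W ω i‖ * ‖W ω j‖ ≤ 1 * 1 := by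
          refine mul_le_mul ?_ ?_ (norm_nonneg _) zero_le_one <;>
            rw [Real.norm_eq_abs, abs_of_nonneg (hω.1 _).1] <;> exact (hω.1 _).2
      _ = 1 := one_mul 1
  have hWWint : ∀ i j, Integrable (fun ω => W ω i * W ω j) μ := fun i j =>
    (integrable_const (1:ℝ)).mono' ((hWmeas i).mul (hWmeas j)).aestronglyMeasurable (hWWbdd i j)
  have hterm_int : ∀ i j, Integrable (fun ω => (W ω i * W ω j) * (ε i ω * ε j ω)) μ :=
    fun i j => (hεij i j).bdd_mul ((hWmeas i).mul (hWmeas j)).aestronglyMeasurable (hWWbdd i j)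
  -- independence of W-functions and ε-functions
  have hindepWE : ∀ (F : (Fin k → ℝ) → ℝ), Measurable F → ∀ (G : (Fin k → ℝ) → ℝ), Measurable G →
      IndepFun (fun ω => F (fun i => E i ω)) (fun ω => G (fun i => ε i ω)) μ :=
    fun F hF G hG => hEε.comp hF hG
  have hWWprod : ∀ i j, ∫ ω, (W ω i * W ω j) * (ε i ω * ε j ω) ∂μ
      = (∫ ω, W ω i * W ω j ∂μ) * ∫ ω, ε i ω * ε j ω ∂μ := by
    intro i j
    have hF : Measurable fun v : Fin k → ℝ => (v i / ∑ l, v l) * (v j / ∑ l, v l) :=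
      ((measurable_pi_apply i).div (Finset.measurable_sum _ fun l _ => measurable_pi_apply l)).mul
        ((measurable_pi_apply j).div (Finset.measurable_sum _ fun l _ => measurable_pi_apply l))
    have hG : Measurable fun v : Fin k → ℝ => v i * v j :=
      (measurable_pi_apply i).mul (measurable_pi_apply j)
    have hInd : IndepFun (fun ω => W ω i * W ω j) (fun ω => ε i ω * ε j ω) μ := by
      refine (hindepWE _ hF _ hG).congr (ae_of_all _ fun ω => ?_) (ae_of_all _ fun ω => rfl)
      show E i ω / (∑ l, E l ω) * (E j ω / ∑ l, E l ω) = W ω i * W ω j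
      rw [hW ω i, hW ω j]
    have h := hInd.integral_mul_eq_mul_integral (hWWint i j).aestronglyMeasurable (hεij i j).aestronglyMeasurable
    simpa [Pi.mul_apply] using h
  have hεij0 : ∀ i j, i ≠ j → ∫ ω, ε i ω * ε j ω ∂μ = 0 := by
    intro i j hij
    have h := (hεindep.indepFun hij).integral_mul_eq_mul_integral (hεint i).aestronglyMeasurable (hεint j).aestronglyMeasurable
    rw [hεmean i, hεmean j, mul_zero] at h
    exact h
  have hεii : ∀ i, ∫ ω, ε i ω * ε i ω ∂μ = variance (ε i) μ := by
    intro i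
    have h2 : ∫ ω, ε i ω * ε i ω ∂μ = ∫ ω, (ε i ^ 2) ω ∂μ :=
      integral_congr_ae (ae_of_all _ fun ω => by
        show ε i ω * ε i ω = ε i ω ^ 2
        rw [pow_two])
    rw [h2, variance_eq_sub (hεL2 i), hεmean i]
    norm_num
  have hεiinn : ∀ i, 0 ≤ ∫ ω, ε i ω * ε i ω ∂μ := fun i =>
    integral_nonneg fun ω => mul_self_nonneg _
  -- the Dirichlet second moment
  have hq : ∀ i, ∫ ω, W ω i * W ω i ∂μ = 2 / (k * (k + 1)) := by
    intro i
    have hcongr : ∫ ω, W ω i * W ω i ∂μ = ∫ ω, (E i ω / ∑ j, E j ω) ^ 2 ∂μ := by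
      refine integral_congr_ae (ae_of_all _ fun ω => ?_)
      show W ω i * W ω i = (E i ω / ∑ j, E j ω) ^ 2
      rw [hW ω i, pow_two]
    rw [hcongr, integral_eq_lintegral_of_nonneg_ae (f := fun ω => (E i ω / ∑ j, E j ω) ^ 2) (ae_of_all _ fun ω => sq_nonneg _)
      (((hEmeas i).div hSmeas).pow_const 2).aestronglyMeasurable,
      aux_crown hk E hEmeas hEindep hEdist i, ENNReal.toReal_ofReal (by positivity)]
  -- T² term
  have hpt : ∀ ω, T ω ^ 2 = ∑ i, ∑ j, (W ω i * W ω j) * (ε i ω * ε j ω) := by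
    intro ω
    rw [hTdef, sq, Finset.sum_mul_sum]
    exact Finset.sum_congr rfl fun i _ => Finset.sum_congr rfl fun j _ => by ring
  have hT2int : Integrable (fun ω => T ω ^ 2) μ := by
    refine (integrable_finset_sum _ fun i _ => integrable_finset_sum _ fun j _ =>
      hterm_int i j).congr (ae_of_all _ fun ω => (hpt ω).symm)
  have hT2 : ∫ ω, T ω ^ 2 ∂μ = ∑ i, (∫ ω, W ω i * W ω i ∂μ) * ∫ ω, ε i ω * ε i ω ∂μ := by
    calc ∫ ω, T ω ^ 2 ∂μ = ∫ ω, ∑ i, ∑ j, (W ω i * W ω j) * (ε i ω * ε j ω) ∂μ :=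
          integral_congr_ae (ae_of_all _ hpt)
      _ = ∑ i, ∑ j, ∫ ω, (W ω i * W ω j) * (ε i ω * ε j ω) ∂μ := by
          rw [integral_finset_sum _ fun i _ => integrable_finset_sum _ fun j _ => hterm_int i j]
          exact Finset.sum_congr rfl fun i _ =>
            integral_finset_sum _ fun j _ => hterm_int i j
      _ = ∑ i, (∫ ω, W ω i * W ω i ∂μ) * ∫ ω, ε i ω * ε i ω ∂μ := by
          refine Finset.sum_congr rfl fun i _ => ?_
          rw [Finset.sum_eq_single i]
          · exact hWWprod i i
          · intro j _ hji
            rw [hWWprod i j, hεij0 i j (Ne.symm hji), mul_zero]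
          · intro h; exact absurd (Finset.mem_univ i) h
  have hνA : 0 ≤ ν + A' * δ ^ α' :=
    add_nonneg hν (mul_nonneg hA' (Real.rpow_nonneg hδ α'))
  have hT2le : ∫ ω, T ω ^ 2 ∂μ ≤ 2 / ((k:ℝ) + 1) * (ν + A' * δ ^ α') := by
    rw [hT2]
    have hstep : ∀ i : Fin k, (∫ ω, W ω i * W ω i ∂μ) * ∫ ω, ε i ω * ε i ω ∂μ
        ≤ 2 / ((k:ℝ) * (k + 1)) * (ν + A' * δ ^ α') := by
      intro i
      rw [hq i]
      refine mul_le_mul_of_nonneg_left ?_ (by positivity)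
      rw [hεii i]
      exact hεvar i
    calc ∑ i : Fin k, (∫ ω, W ω i * W ω i ∂μ) * ∫ ω, ε i ω * ε i ω ∂μ
        ≤ ∑ _i : Fin k, 2 / ((k:ℝ) * (k + 1)) * (ν + A' * δ ^ α') :=
          Finset.sum_le_sum fun i _ => hstep i
      _ = (k:ℝ) * (2 / ((k:ℝ) * (k + 1)) * (ν + A' * δ ^ α')) := by
          rw [Finset.sum_const, Finset.card_univ, Fintype.card_fin, nsmul_eq_mul]
      _ = 2 / ((k:ℝ) + 1) * (ν + A' * δ ^ α') := by
          field_simp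
  -- cross term
  have hWBbdd : ∀ i, ∀ᵐ ω ∂μ, ‖W ω i * B ω‖ ≤ A * δ ^ α := by
    intro i
    filter_upwards [hWprop, hBbdd] with ω hω hB
    rw [norm_mul, Real.norm_eq_abs, Real.norm_eq_abs, abs_of_nonneg (hω.1 i).1]
    calc W ω i * |B ω| ≤ 1 * (A * δ ^ α) :=
          mul_le_mul (hω.1 i).2 hB (abs_nonneg _) zero_le_one
      _ = A * δ ^ α := one_mul _
  have hWBint : ∀ i, Integrable (fun ω => (W ω i * B ω) * ε i ω) μ := fun i =>
    (hεint i).bdd_mul ((hWmeas i).mul hBmeas).aestronglyMeasurable (hWBbdd i)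
  have hptTB : ∀ ω, T ω * B ω = ∑ i, (W ω i * B ω) * ε i ω := by
    intro ω
    rw [hTdef, Finset.sum_mul]
    exact Finset.sum_congr rfl fun i _ => by ring
  have hTBint : Integrable (fun ω => T ω * B ω) μ :=
    (integrable_finset_sum _ fun i _ => hWBint i).congr (ae_of_all _ fun ω => (hptTB ω).symm)
  have hTB : ∫ ω, T ω * B ω ∂μ = 0 := by
    rw [integral_congr_ae (ae_of_all _ hptTB),
      integral_finset_sum _ fun i _ => hWBint i]
    refine Finset.sum_eq_zero fun i _ => ?_
    have hF : Measurable fun v : Fin k → ℝ =>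
        (v i / ∑ l, v l) * (∑ j, (v j / ∑ l, v l) * b j) := by
      have hs : Measurable fun v : Fin k → ℝ => ∑ l, v l :=
        Finset.measurable_sum _ fun l _ => measurable_pi_apply l
      exact ((measurable_pi_apply i).div hs).mul
        (Finset.measurable_sum _ fun j _ => ((measurable_pi_apply j).div hs).mul_const (b j))
    have hG : Measurable fun v : Fin k → ℝ => v i := measurable_pi_apply i
    have hInd : IndepFun (fun ω => W ω i * B ω) (ε i) μ := by
      refine (hindepWE _ hF _ hG).congr (ae_of_all _ fun ω => ?_) (ae_of_all _ fun ω => rfl)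
      show E i ω / (∑ l, E l ω) * (∑ j, (E j ω / ∑ l, E l ω) * b j) = W ω i * B ω
      rw [hW ω i, hBdef]
      congr 1
      exact Finset.sum_congr rfl fun j _ => by rw [hW ω j]
    have h := hInd.integral_mul_eq_mul_integral
      ((integrable_const (A * δ ^ α)).mono'
        ((hWmeas i).mul hBmeas).aestronglyMeasurable (hWBbdd i)).aestronglyMeasurable (hεint i).aestronglyMeasurable
    rw [hεmean i, mul_zero] at h
    simpa [Pi.mul_apply] using h
  -- bias term
  have hB2bdd : ∀ᵐ ω ∂μ, ‖B ω ^ 2‖ ≤ (A * δ ^ α) ^ 2 := by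
    filter_upwards [hBbdd] with ω h
    rw [Real.norm_eq_abs, abs_pow]
    exact pow_le_pow_left₀ (abs_nonneg _) h 2
  have hB2int : Integrable (fun ω => B ω ^ 2) μ :=
    (integrable_const ((A * δ ^ α) ^ 2)).mono' (hBmeas.pow_const 2).aestronglyMeasurable hB2bdd
  have hB2 : ∫ ω, B ω ^ 2 ∂μ ≤ A ^ 2 * δ ^ (2 * α) := by
    have h1 : ∫ ω, B ω ^ 2 ∂μ ≤ ∫ _ω, (A * δ ^ α) ^ 2 ∂μ := by
      refine integral_mono_ae hB2int (integrable_const _) ?_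
      filter_upwards [hB2bdd] with ω h
      rw [Real.norm_eq_abs, abs_of_nonneg (sq_nonneg _)] at h
      exact h
    rw [integral_const, probReal_univ, one_smul] at h1
    refine h1.trans_eq ?_
    rw [mul_pow]
    congr 1
    rw [← Real.rpow_natCast (δ ^ α) 2, ← Real.rpow_mul hδ]
    norm_num
    rw [mul_comm]
  -- final assembly
  have hmain : ∫ ω, (∑ i, W ω i * (ε i ω + b i)) ^ 2 ∂μ
      = ∫ ω, T ω ^ 2 ∂μ + (2 * ∫ ω, T ω * B ω ∂μ + ∫ ω, B ω ^ 2 ∂μ) := by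
    have hsq : ∀ ω, (∑ i, W ω i * (ε i ω + b i)) ^ 2
        = T ω ^ 2 + (2 * (T ω * B ω) + B ω ^ 2) := by
      intro ω
      have : ∑ i, W ω i * (ε i ω + b i) = T ω + B ω := by
        rw [hTdef, hBdef, ← Finset.sum_add_distrib]
        exact Finset.sum_congr rfl fun i _ => by ring
      rw [this]; ring
    have h1 : Integrable (fun ω => 2 * (T ω * B ω)) μ := hTBint.const_mul 2
    calc ∫ ω, (∑ i, W ω i * (ε i ω + b i)) ^ 2 ∂μ
        = ∫ ω, (T ω ^ 2 + (2 * (T ω * B ω) + B ω ^ 2)) ∂μ :=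
          integral_congr_ae (ae_of_all _ hsq)
      _ = ∫ ω, T ω ^ 2 ∂μ + ∫ ω, (2 * (T ω * B ω) + B ω ^ 2) ∂μ :=
          integral_add hT2int (h1.add hB2int)
      _ = ∫ ω, T ω ^ 2 ∂μ + (∫ ω, 2 * (T ω * B ω) ∂μ + ∫ ω, B ω ^ 2 ∂μ) := by
          rw [integral_add h1 hB2int]
      _ = ∫ ω, T ω ^ 2 ∂μ + (2 * ∫ ω, T ω * B ω ∂μ + ∫ ω, B ω ^ 2 ∂μ) := by
          rw [MeasureTheory.integral_const_mul]
  rw [hmain, hTB]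
  have := hT2le
  have := hB2
  push_cast
  linarith
end

section
/- Let (Ω, F, P) be a probability space, E a measurable space, X : Ω → E measurable, and η, η̂ : E → [0,1] measurable. For p ∈ [0,1] and b ∈ {0,1} let r(b, p) = 1 − p if b = 1 and p if b = 0, and define f*(x) = 1[η(x) > 1/2] and f̂(x) = 1[η̂(x) > 1/2]. Then E[r(f̂(X), η(X))] − E[r(f*(X), η(X))] ≤ 2·√(E[(η̂(X) − η(X))²]). -/
open MeasureTheory

/-- Corollary 2 core inequality: the excess risk of the plug-in classifier
is at most twice the square root of the mean squared error of the regression estimate. -/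
theorem plugin_excess_risk_le_two_sqrt_mse {Ω : Type*} [MeasurableSpace Ω]
    {μ : Measure Ω} [IsProbabilityMeasure μ]
    {E : Type*} [MeasurableSpace E] (X : Ω → E) (hX : Measurable X)
    (η ηhat : E → ℝ) (hη : Measurable η) (hηhat : Measurable ηhat)
    (hη01 : ∀ x, η x ∈ Set.Icc (0 : ℝ) 1) (hηhat01 : ∀ x, ηhat x ∈ Set.Icc (0 : ℝ) 1)
    (r : Bool → ℝ → ℝ) (hr : ∀ b x, r b x = if b then 1 - x else x)
    (fstar fhat : E → Bool)
    (hfstar : ∀ x, fstar x = decide (1 / 2 < η x))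
    (hfhat : ∀ x, fhat x = decide (1 / 2 < ηhat x)) :
    (∫ ω, r (fhat (X ω)) (η (X ω)) ∂μ) - (∫ ω, r (fstar (X ω)) (η (X ω)) ∂μ) ≤
      2 * Real.sqrt (∫ ω, (ηhat (X ω) - η (X ω)) ^ 2 ∂μ) := by
  set g : Ω → ℝ := fun ω => |ηhat (X ω) - η (X ω)| with hg
  -- measurability
  have hmeas_hat : Measurable fun ω => r (fhat (X ω)) (η (X ω)) := by
    have : (fun ω => r (fhat (X ω)) (η (X ω))) =
        fun ω => if 1/2 < ηhat (X ω) then 1 - η (X ω) else η (X ω) := by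
      funext ω; rw [hr, hfhat]; by_cases h : 1/2 < ηhat (X ω) <;> simp [h]
    rw [this]
    exact Measurable.ite (measurableSet_lt measurable_const (hηhat.comp hX))
      (measurable_const.sub (hη.comp hX)) (hη.comp hX)
  have hmeas_star : Measurable fun ω => r (fstar (X ω)) (η (X ω)) := by
    have : (fun ω => r (fstar (X ω)) (η (X ω))) =
        fun ω => if 1/2 < η (X ω) then 1 - η (X ω) else η (X ω) := by
      funext ω; rw [hr, hfstar]; by_cases h : 1/2 < η (X ω) <;> simp [h]
    rw [this]
    exact Measurable.ite (measurableSet_lt measurable_const (hη.comp hX))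
      (measurable_const.sub (hη.comp hX)) (hη.comp hX)
  have hrbound : ∀ (b : Bool) (x : E), |r b (η x)| ≤ 1 := by
    intro b x
    have h1 := (hη01 x).1; have h2 := (hη01 x).2
    rw [hr]; cases b <;> simp <;> rw [abs_le] <;> constructor <;> linarith
  have hint_hat : Integrable (fun ω => r (fhat (X ω)) (η (X ω))) μ :=
    (integrable_const (1 : ℝ)).mono' hmeas_hat.aestronglyMeasurable
      (Filter.Eventually.of_forall fun ω => hrbound _ _)
  have hint_star : Integrable (fun ω => r (fstar (X ω)) (η (X ω))) μ :=
    (integrable_const (1 : ℝ)).mono' hmeas_star.aestronglyMeasurable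
      (Filter.Eventually.of_forall fun ω => hrbound _ _)
  have hgmeas : Measurable g := ((hηhat.comp hX).sub (hη.comp hX)).abs
  have hgbound : ∀ ω, |g ω| ≤ 2 := by
    intro ω
    have h1 := hη01 (X ω); have h2 := hηhat01 (X ω)
    simp only [hg, abs_abs]
    rw [abs_le]
    constructor <;> linarith [h1.1, h1.2, h2.1, h2.2]
  have hgint : Integrable g μ :=
    (integrable_const (2 : ℝ)).mono' hgmeas.aestronglyMeasurable
      (Filter.Eventually.of_forall hgbound)
  -- pointwise bound
  have hpt : ∀ ω, r (fhat (X ω)) (η (X ω)) - r (fstar (X ω)) (η (X ω)) ≤ 2 * g ω := by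
    intro ω
    set x := X ω
    have hgx : g ω = |ηhat x - η x| := rfl
    rw [hr, hr, hfhat, hfstar, hgx]
    rcases abs_cases (ηhat x - η x) with ⟨he, hp⟩ | ⟨he, hp⟩ <;> rw [he] <;>
      split_ifs with ha hb hb <;> simp only [decide_eq_true_eq] at * <;> linarith
  -- integral of pointwise bound
  have step1 : (∫ ω, r (fhat (X ω)) (η (X ω)) ∂μ) - (∫ ω, r (fstar (X ω)) (η (X ω)) ∂μ)
      ≤ 2 * ∫ ω, g ω ∂μ := by
    rw [← integral_sub hint_hat hint_star, ← integral_const_mul]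
    exact integral_mono (hint_hat.sub hint_star) (hgint.const_mul 2)
      (fun ω => hpt ω)
  -- Cauchy-Schwarz: ∫ g ≤ √(∫ g²)
  have step2 : (∫ ω, g ω ∂μ) ≤ Real.sqrt (∫ ω, (ηhat (X ω) - η (X ω)) ^ 2 ∂μ) := by
    have hmem : MemLp g 2 μ :=
      (memLp_top_of_bound hgmeas.aestronglyMeasurable 2
        (Filter.Eventually.of_forall hgbound)).mono_exponent le_top
    have hmem1 : MemLp (fun _ : Ω => (1 : ℝ)) 2 μ := memLp_const 1
    have hpq : Real.HolderConjugate 2 2 := by constructor <;> norm_num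
    have := integral_mul_le_Lp_mul_Lq_of_nonneg hpq
      (Filter.Eventually.of_forall fun ω => abs_nonneg _)
      (Filter.Eventually.of_forall fun _ : Ω => zero_le_one)
      (by simpa using hmem) (by simpa using hmem1)
    simp only [mul_one, one_pow] at this
    have hsq : (∫ ω, g ω ^ (2:ℝ) ∂μ) = ∫ ω, (ηhat (X ω) - η (X ω)) ^ 2 ∂μ := by
      apply integral_congr_ae; apply Filter.Eventually.of_forall; intro ω
      show g ω ^ (2:ℝ) = (ηhat (X ω) - η (X ω)) ^ 2
      rw [show ((2:ℝ)) = ((2:ℕ):ℝ) by norm_num, Real.rpow_natCast]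
      exact sq_abs _
    have hone : (∫ _ : Ω, (1:ℝ) ^ (2:ℝ) ∂μ) = 1 := by
      simp [Real.one_rpow]
    rw [hsq, hone] at this
    rw [Real.one_rpow] at this
    rw [Real.sqrt_eq_rpow]
    simpa using this
  calc (∫ ω, r (fhat (X ω)) (η (X ω)) ∂μ) - (∫ ω, r (fstar (X ω)) (η (X ω)) ∂μ)
      ≤ 2 * ∫ ω, g ω ∂μ := step1
    _ ≤ 2 * Real.sqrt (∫ ω, (ηhat (X ω) - η (X ω)) ^ 2 ∂μ) := by linarith [step2]
end
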